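/- Let p be an odd prime and let m, m' be positive rational numbers greater than 1, neither of which is the p-th power of a rational number; let α and α' be their unique real p-th roots. Then ℚ(α) = ℚ(α') as subfields of ℝ if and only if there exist an integer i with 1 ≤ i ≤ p−1 (equivalently, gcd(i,p) = 1) and a rational number γ > 0 such that m' = γ^p · m^i. -/

import Mathlib

open Polynomial IntermediateField

set_option maxHeartbeats 1000000

lemma aux_minpoly {p : ℕ} (hp : p.Prime) {K L : Type*} [Field K] [Field L] [Algebra K L]
    {a : K} (ha : ∀ b : K, b ^ p ≠ a) {x : L} (hx : x ^ p = algebraMap K L a) :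
    minpoly K x = X ^ p - C a :=
  (minpoly.eq_of_irreducible_of_monic (X_pow_sub_C_irreducible_of_prime hp ha)
    (by simp [hx]) (monic_X_pow_sub_C a hp.ne_zero)).symm

lemma aux_int {p : ℕ} (hp : p.Prime) {K L : Type*} [Field K] [Field L] [Algebra K L]
    {a : K} {x : L} (hx : x ^ p = algebraMap K L a) : IsIntegral K x :=
  ⟨X ^ p - C a, monic_X_pow_sub_C a hp.ne_zero, by rw [← Polynomial.aeval_def]; simp [hx]⟩

/-- Two pure prime degree fields `ℚ(m^(1/p))` and `ℚ(m'^(1/p))` inside `ℝ` coincide if and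
only if `m' = γ^p · m^i` for some `1 ≤ i ≤ p−1` and some positive rational `γ`. -/
theorem pure_prime_degree_field_eq_iff
    (p : ℕ) (hp : p.Prime) (hodd : Odd p)
    (m m' : ℚ) (hm : 1 < m) (hm' : 1 < m')
    (hmp : ¬ ∃ r : ℚ, r ^ p = m) (hmp' : ¬ ∃ r : ℚ, r ^ p = m')
    (α α' : ℝ) (hαpos : 0 < α) (hαp : α ^ p = (m : ℝ))
    (hα'pos : 0 < α') (hα'p : α' ^ p = (m' : ℝ)) :
    IntermediateField.adjoin ℚ {α} = IntermediateField.adjoin ℚ {α'} ↔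
      ∃ i : ℕ, 1 ≤ i ∧ i ≤ p - 1 ∧ ∃ γ : ℚ, 0 < γ ∧ m' = γ ^ p * m ^ i := by
  have hma : ∀ r : ℚ, r ^ p ≠ m := fun r hr => hmp ⟨r, hr⟩
  have hma' : ∀ r : ℚ, r ^ p ≠ m' := fun r hr => hmp' ⟨r, hr⟩
  have hαpm : α ^ p = algebraMap ℚ ℝ m := by rw [hαp]; rfl
  have hα'pm : α' ^ p = algebraMap ℚ ℝ m' := by rw [hα'p]; rfl
  have hαint : IsIntegral ℚ α := aux_int hp hαpm
  have hα'int : IsIntegral ℚ α' := aux_int hp hα'pm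
  haveI : FiniteDimensional ℚ ℚ⟮α⟯ := IntermediateField.adjoin.finiteDimensional hαint
  have hfr : Module.finrank ℚ ℚ⟮α⟯ = p := by
    rw [IntermediateField.adjoin.finrank hαint, aux_minpoly hp hma hαpm,
      natDegree_X_pow_sub_C]
  have hfr' : Module.finrank ℚ ℚ⟮α'⟯ = p := by
    rw [IntermediateField.adjoin.finrank hα'int, aux_minpoly hp hma' hα'pm,
      natDegree_X_pow_sub_C]
  constructor
  · intro h
    have hma : ∀ r : ℚ, r ^ p ≠ m := fun r hr => hmp ⟨r, hr⟩
    have hma' : ∀ r : ℚ, r ^ p ≠ m' := fun r hr => hmp' ⟨r, hr⟩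
    have hαpm : α ^ p = algebraMap ℚ ℝ m := by rw [hαp]; rfl
    have hα'pm : α' ^ p = algebraMap ℚ ℝ m' := by rw [hα'p]; rfl
    have hαint : IsIntegral ℚ α := aux_int hp hαpm
    have hminα : minpoly ℚ α = X ^ p - C m := aux_minpoly hp hma hαpm
    haveI : NeZero p := ⟨hp.ne_zero⟩
    -- primitive root
    set ζ : ℂ := Complex.exp (2 * Real.pi * Complex.I / p) with hζdef
    have hζ : IsPrimitiveRoot ζ p := Complex.isPrimitiveRoot_exp p hp.ne_zero
    have hζp : ζ ^ p = 1 := hζ.pow_eq_one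
    have hζint : IsIntegral ℚ ζ := aux_int hp (a := 1) (by simpa using hζp)
    haveI : FiniteDimensional ℚ ℚ⟮ζ⟯ := IntermediateField.adjoin.finiteDimensional hζint
    have hfrF : Module.finrank ℚ ℚ⟮ζ⟯ = p - 1 := by
      rw [IntermediateField.adjoin.finrank hζint, ← Polynomial.cyclotomic_eq_minpoly_rat hζ hp.pos,
        natDegree_cyclotomic, Nat.totient_prime hp]
    have hFm : ∀ b : ℚ⟮ζ⟯, b ^ p ≠ algebraMap ℚ ℚ⟮ζ⟯ m := by
      intro b hb
      have hbint : IsIntegral ℚ b := IsIntegral.of_finite ℚ b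
      have hdvd : (minpoly ℚ b).natDegree ∣ Module.finrank ℚ ℚ⟮ζ⟯ := minpoly.degree_dvd hbint
      rw [aux_minpoly hp hma hb, natDegree_X_pow_sub_C, hfrF] at hdvd
      have h2 := Nat.le_of_dvd (by have := hp.two_le; omega) hdvd
      have := hp.two_le; omega
    -- minpoly of α over ℚ(ζ)
    have hαℂ : ((α:ℂ)) ^ p = algebraMap ℚ⟮ζ⟯ ℂ (algebraMap ℚ ℚ⟮ζ⟯ m) := by
      rw [← IsScalarTower.algebraMap_apply, eq_ratCast (algebraMap ℚ ℂ) m]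
      push_cast [← hαp]
      norm_cast
    have hminF : minpoly ℚ⟮ζ⟯ (α : ℂ) = X ^ p - C (algebraMap ℚ ℚ⟮ζ⟯ m) := aux_minpoly hp hFm hαℂ
    have li : LinearIndependent ℚ⟮ζ⟯ fun i : Fin p => (α:ℂ) ^ (i : ℕ) := by
      have h2 := linearIndependent_pow (K := ℚ⟮ζ⟯) (α : ℂ)
      rwa [hminF, natDegree_X_pow_sub_C] at h2
    -- α' as polynomial in α
    have hα'mem : α' ∈ ℚ⟮α⟯ := h ▸ IntermediateField.mem_adjoin_simple_self ℚ α'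
    obtain ⟨g0, hg0⟩ : ∃ g : ℚ[X], Polynomial.aeval α g = α' := by
      have h2 : α' ∈ Algebra.adjoin ℚ ({α} : Set ℝ) := by
        rw [← IntermediateField.adjoin_simple_toSubalgebra_of_isAlgebraic hαint.isAlgebraic]
        exact hα'mem
      rwa [Algebra.adjoin_singleton_eq_range_aeval, AlgHom.mem_range] at h2
    have hmonic : (minpoly ℚ α).Monic := minpoly.monic hαint
    set g : ℚ[X] := g0 %ₘ (minpoly ℚ α) with hgdef
    have hdeg : g.natDegree < p := by
      by_cases hg' : g = 0
      · rw [hg', natDegree_zero]; exact hp.pos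
      · have h1 : g.degree < (minpoly ℚ α).degree := degree_modByMonic_lt g0 hmonic
        rw [hminα, degree_X_pow_sub_C hp.pos] at h1
        exact (natDegree_lt_iff_degree_lt hg').mpr h1
    have hg : Polynomial.aeval α g = α' := by
      rw [hgdef, modByMonic_eq_sub_mul_div g0 (minpoly ℚ α), map_sub, map_mul, minpoly.aeval,
        zero_mul, sub_zero, hg0]
    -- the embedding σ with σ α = ζ α
    have hζαroot : (ζ * α) ∈ (minpoly ℚ α).aroots ℂ := by
      rw [Polynomial.mem_aroots]
      refine ⟨minpoly.ne_zero hαint, ?_⟩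
      rw [hminα]
      have : (α:ℂ) ^ p = (m : ℂ) := by push_cast [← hαp]; norm_cast
      simp [mul_pow, hζp, this]
    set σ : ℚ⟮α⟯ →ₐ[ℚ] ℂ := (IntermediateField.algHomAdjoinIntegralEquiv ℚ hαint).symm ⟨ζ * α, hζαroot⟩
      with hσdef
    have hσgen : σ (IntermediateField.AdjoinSimple.gen ℚ α) = ζ * α :=
      IntermediateField.algHomAdjoinIntegralEquiv_symm_apply_gen ℚ hαint _
    set β' : ℚ⟮α⟯ := ⟨α', hα'mem⟩ with hβ'def
    have hβ'g : β' = Polynomial.aeval (IntermediateField.AdjoinSimple.gen ℚ α) g := by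
      apply Subtype.ext
      have h2 := Polynomial.aeval_algHom_apply (ℚ⟮α⟯.val) (IntermediateField.AdjoinSimple.gen ℚ α) g
      simp [hg] at h2; exact h2
    have hσβ'1 : σ β' = Polynomial.aeval (ζ * (α:ℂ)) g := by
      rw [hβ'g, ← Polynomial.aeval_algHom_apply, hσgen]
    have hσβ'p : (σ β') ^ p = (m' : ℂ) := by
      rw [← map_pow]
      have hβ'p : β' ^ p = algebraMap ℚ ℚ⟮α⟯ m' := by
        apply Subtype.ext
        push_cast [hβ'def]
        exact_mod_cast hα'p
      rw [hβ'p, AlgHom.commutes]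
      norm_cast
    have hα'ne : (α':ℂ) ≠ 0 := by exact_mod_cast hα'pos.ne'
    have hα'pℂ : ((α':ℝ):ℂ) ^ p = (m' : ℂ) := by push_cast [← hα'p]; norm_cast
    have hq : (σ β' / (α':ℂ)) ^ p = 1 := by
      rw [div_pow, hσβ'p, hα'pℂ, div_self]
      rw [← hα'pℂ]; exact pow_ne_zero _ hα'ne
    obtain ⟨i, hip, hζi⟩ := hζ.eq_pow_of_pow_eq_one hq
    have hσβ' : σ β' = ζ ^ i * α' := by
      rw [hζi, div_mul_cancel₀ _ hα'ne]
    -- the ℂ-level identity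
    have hα'aeval : Polynomial.aeval ((α:ℝ):ℂ) g = ((α':ℝ):ℂ) := by
      have h2 := Polynomial.aeval_algHom_apply (Complex.ofRealAm.restrictScalars ℚ) α g
      simpa [hg] using h2
    have hkey : ∑ j ∈ Finset.range p, g.coeff j • (ζ * (α:ℂ)) ^ j
        = ζ ^ i * ∑ j ∈ Finset.range p, g.coeff j • ((α:ℂ)) ^ j := by
      rw [← Polynomial.aeval_eq_sum_range' hdeg, ← Polynomial.aeval_eq_sum_range' hdeg,
        ← hσβ'1, hα'aeval, hσβ']
    set ζF : ℚ⟮ζ⟯ := IntermediateField.AdjoinSimple.gen ℚ ζ with hζFdef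
    have hζFcoe : (ζF : ℂ) = ζ := rfl
    have hkey' : ∑ j ∈ Finset.range p, ((g.coeff j : ℂ) * (ζ ^ j - ζ ^ i)) * (α:ℂ) ^ j = 0 := by
      have h2 := hkey
      simp only [Rat.smul_def, mul_pow] at h2
      rw [Finset.mul_sum, ← sub_eq_zero, ← Finset.sum_sub_distrib] at h2
      rw [← h2]
      apply Finset.sum_congr rfl
      intro j _
      ring
    have hterm : ∀ j : ℕ,
        (ℚ⟮ζ⟯.val) (algebraMap ℚ ℚ⟮ζ⟯ (g.coeff j) * (ζF ^ j - ζF ^ i))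
          = (g.coeff j : ℂ) * (ζ ^ j - ζ ^ i) := by
      intro j
      rw [map_mul, map_sub, map_pow, map_pow, eq_ratCast (algebraMap ℚ ℚ⟮ζ⟯), map_ratCast]
      rfl
    have hdzero : ∀ j : Fin p,
        algebraMap ℚ ℚ⟮ζ⟯ (g.coeff (j:ℕ)) * (ζF ^ (j:ℕ) - ζF ^ i) = 0 := by
      refine Fintype.linearIndependent_iff.mp li
        (fun j => algebraMap ℚ ℚ⟮ζ⟯ (g.coeff (j:ℕ)) * (ζF ^ (j:ℕ) - ζF ^ i)) ?_
      have hfin := Fin.sum_univ_eq_sum_range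
        (fun j => (algebraMap ℚ ℚ⟮ζ⟯ (g.coeff j) * (ζF ^ j - ζF ^ i)) • ((α:ℂ)) ^ j) p
      rw [hfin, ← hkey']
      refine Finset.sum_congr rfl fun j _ => ?_
      rw [Algebra.smul_def]
      show (ℚ⟮ζ⟯.val) _ * _ = _
      rw [hterm j]
    have hcoeff : ∀ j, j < p → j ≠ i → g.coeff j = 0 := by
      intro j hj hne
      have hd : (g.coeff j : ℂ) * (ζ ^ j - ζ ^ i) = 0 := by
        rw [← hterm j, hdzero ⟨j, hj⟩, map_zero]
      rcases mul_eq_zero.mp hd with h1 | h2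
      · exact_mod_cast h1
      · exact absurd (hζ.pow_inj hj hip (sub_eq_zero.mp h2)) hne
    have hαsum : α' = ∑ j ∈ Finset.range p, g.coeff j • α ^ j := by
      rw [← hg, Polynomial.aeval_eq_sum_range' hdeg]
    have hsingle : α' = g.coeff i • α ^ i := by
      rw [hαsum, Finset.sum_eq_single i]
      · intro j hjr hne
        rw [hcoeff j (Finset.mem_range.mp hjr) hne, zero_smul]
      · intro hni
        exact absurd (Finset.mem_range.mpr hip) hni
    set γ := g.coeff i with hγdef
    have hγℝ : α' = (γ:ℝ) * α ^ i := by rw [hsingle, Rat.smul_def]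
    have hγpos : 0 < γ := by
      have hpow : (0:ℝ) < α ^ i := pow_pos hαpos i
      have hγr : (0:ℝ) < (γ:ℝ) := by nlinarith
      exact_mod_cast hγr
    have hmeq : m' = γ ^ p * m ^ i := by
      have h2 : (m':ℝ) = (γ:ℝ) ^ p * (m:ℝ) ^ i := by
        rw [← hα'p, hγℝ, mul_pow, ← pow_mul, mul_comm i p, pow_mul, hαp]
      exact_mod_cast h2
    have hi1 : 1 ≤ i := by
      rcases Nat.eq_zero_or_pos i with h0 | h1
      · exfalso
        apply hma' γ
        rw [hmeq, h0, pow_zero, mul_one]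
      · exact h1
    exact ⟨i, hi1, by omega, γ, hγpos, hmeq⟩
  · rintro ⟨i, hi1, hi2, γ, hγ, hmm'⟩
    have hα'eq : α' = (γ : ℝ) * α ^ i := by
      have h1 : (0:ℝ) ≤ (γ : ℝ) * α ^ i := by positivity
      refine (pow_left_strictMonoOn₀ hp.ne_zero).injOn hα'pos.le h1 ?_
      rw [hα'p, mul_pow, ← pow_mul, mul_comm i p, pow_mul, hαp, hmm']
      push_cast; ring
    have hle : ℚ⟮α'⟯ ≤ ℚ⟮α⟯ := by
      rw [IntermediateField.adjoin_le_iff, Set.singleton_subset_iff]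
      rw [hα'eq]
      exact mul_mem (by simpa using IntermediateField.algebraMap_mem ℚ⟮α⟯ γ)
        (pow_mem (IntermediateField.mem_adjoin_simple_self ℚ α) i)
    exact (IntermediateField.eq_of_le_of_finrank_eq hle (by rw [hfr', hfr])).symm
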